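/- If X is a finite set, then every ideal of the free commutative dialgebra Di[X] over a field k has a finite Gröbner–Shirshov basis with respect to any monomial-center ordering. -/

import Mathlib

namespace CDi

/-- A "diword": a basis element of the free commutative disemigroup `⌊X⁺⌋₁ ∪ ⌊XX⌋₂`:
a nonempty multiset (commutative word) together with a label `1`, or label `2`
when the word has length `2`. -/
def DiWord (X : Type*) :=
  {p : Multiset X × ℕ // p.1 ≠ 0 ∧ (p.2 = 1 ∨ (p.2 = 2 ∧ Multiset.card p.1 = 2))}

namespace DiWord

variable {X : Type*}

def word (a : DiWord X) : Multiset X := a.1.1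

def lbl (a : DiWord X) : ℕ := a.1.2

theorem word_ne (a : DiWord X) : a.word ≠ 0 := a.2.1

theorem add_word_ne (a b : DiWord X) : a.word + b.word ≠ 0 := by
  intro h
  have h1 := congrArg Multiset.card h
  simp only [Multiset.card_add, Multiset.card_zero] at h1
  have := a.word_ne
  rw [← Multiset.card_pos] at this
  omega

/-- The operation `⊣` on `Disgp[X]`: always produces label 1. -/
def pd (a b : DiWord X) : DiWord X :=
  ⟨(a.word + b.word, 1), add_word_ne a b, Or.inl rfl⟩

/-- The operation `⊢` on `Disgp[X]`: produces label 2 exactly when both factors are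
single letters (total length 2), label 1 otherwise. -/
def pv (a b : DiWord X) : DiWord X :=
  ⟨(a.word + b.word, if Multiset.card (a.word + b.word) = 2 then 2 else 1), by
    refine ⟨add_word_ne a b, ?_⟩
    split_ifs with h
    · exact Or.inr ⟨rfl, h⟩
    · exact Or.inl rfl⟩

/-- `⌊u⌋₁` for a nonempty commutative word `u`. -/
def m1 (u : Multiset X) (h : u ≠ 0) : DiWord X := ⟨(u, 1), h, Or.inl rfl⟩

/-- A single letter `x ∈ X`, i.e. `⌊x⌋₁`. -/
def mX (x : X) : DiWord X := m1 {x} (by simp)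

/-- `⌊xx'⌋₂`. -/
def m2 (x y : X) : DiWord X := ⟨({x, y}, 2), by simp, Or.inr ⟨rfl, by simp⟩⟩

end DiWord
/-- A monomial ordering on the free commutative semigroup `⌊X⁺⌋` (nonempty multisets
over `X`): a well-ordering compatible with multiplication. -/
structure MonOrd (X : Type*) where
  lt : Multiset X → Multiset X → Prop
  wf : WellFounded fun a b : {u : Multiset X // u ≠ 0} => lt a.1 b.1
  trans : ∀ u v w : Multiset X, u ≠ 0 → v ≠ 0 → w ≠ 0 → lt u v → lt v w → lt u w
  total : ∀ u v : Multiset X, u ≠ 0 → v ≠ 0 → u ≠ v → lt u v ∨ lt v u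
  compat : ∀ u v w : Multiset X, u ≠ 0 → v ≠ 0 → lt u v → lt (u + w) (v + w)

/-- The monomial-center ordering on `⌊X⁺⌋₁ ∪ ⌊XX⌋₂` induced by a monomial ordering:
compare the words first, then the labels. -/
def MonOrd.dlt {X : Type*} (o : MonOrd X) (a b : DiWord X) : Prop :=
  o.lt a.word b.word ∨ (a.word = b.word ∧ a.lbl < b.lbl)

def MonOrd.dle {X : Type*} (o : MonOrd X) (a b : DiWord X) : Prop :=
  a = b ∨ o.dlt a b

variable {X k : Type*} [Ring k]

/-- The free commutative dialgebra `Di[X]` (polynomial diring over `k`): the free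
`k`-module on the diwords. -/
abbrev Di (X k : Type*) [Ring k] := DiWord X →₀ k

/-- The basis diword `m` viewed as an element of `Di[X]`. -/
noncomputable def mono (m : DiWord X) : Di X k := Finsupp.single m 1

/-- The operation `⊣` on `Di[X]`, extended bilinearly. -/
noncomputable def pL (f g : Di X k) : Di X k :=
  f.sum fun u a => g.sum fun v b => Finsupp.single (DiWord.pd u v) (a * b)

/-- The operation `⊢` on `Di[X]`, extended bilinearly. -/
noncomputable def pR (f g : Di X k) : Di X k :=
  f.sum fun u a => g.sum fun v b => Finsupp.single (DiWord.pv u v) (a * b)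

/-- `m` is the leading monomial of `f` (w.r.t. the monomial-center ordering `o`). -/
def IsLM (o : MonOrd X) (f : Di X k) (m : DiWord X) : Prop :=
  m ∈ f.support ∧ ∀ u ∈ f.support, u ≠ m → o.dlt u m

/-- `f` is strong: the associative word of its leading monomial is strictly greater than
the associative word of every other monomial in its support (equivalently `f̃ > r̃_f`). -/
def IsStrong (o : MonOrd X) (f : Di X k) : Prop :=
  ∃ m, IsLM o f m ∧ ∀ u ∈ f.support, u ≠ m → o.lt u.word m.word

/-- Normal `S`-polynomials: `s`, `s ⊢ x` (when `|s̃| = 1`), or `s ⊣ ⌊a⌋₁` (when `s` is strong). -/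
def IsNormal (o : MonOrd X) (S : Set (Di X k)) (g : Di X k) : Prop :=
  g ∈ S ∨
    (∃ s ∈ S, ∃ x : X, (∃ m, IsLM o s m ∧ Multiset.card m.word = 1) ∧
      g = pR s (mono (DiWord.mX x))) ∨
    (∃ s ∈ S, ∃ a : Multiset X, ∃ ha : a ≠ 0, IsStrong o s ∧
      g = pL s (mono (DiWord.m1 a ha)))

/-- `m ∈ Irr(S)`: `m` is not the leading monomial of any normal `S`-polynomial. -/
def Irr (o : MonOrd X) (S : Set (Di X k)) (m : DiWord X) : Prop :=
  ∀ g : Di X k, IsNormal o S g → ¬ IsLM o g m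

/-- Every element of `S` is monic. -/
def MonicSet (o : MonOrd X) (S : Set (Di X k)) : Prop :=
  ∀ s ∈ S, ∃ m, IsLM o s m ∧ s m = 1

/-- `h` is trivial modulo `S`: `h` is a linear combination of normal `S`-polynomials whose
leading monomials are `≤` the leading monomial of `h`. -/
def TrivialMod (o : MonOrd X) (S : Set (Di X k)) (h : Di X k) : Prop :=
  ∃ (n : ℕ) (α : Fin n → k) (g : Fin n → Di X k),
    (∀ i, IsNormal o S (g i)) ∧ h = ∑ i, α i • g i ∧
    ∀ i, α i ≠ 0 → ∀ mi mh, IsLM o (g i) mi → IsLM o h mh → o.dle mi mh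

/-- The compositions of elements of a (monic) set `S`: multiplication, special, equal,
short intersection, equal multiplication and long intersection compositions. -/
def IsComp (o : MonOrd X) (S : Set (Di X k)) (h : Di X k) : Prop :=
  -- multiplication composition
  (∃ f ∈ S, ¬ IsStrong o f ∧ ∃ x : X,
      h = pR f (mono (DiWord.mX x)) ∨ h = pL f (mono (DiWord.mX x))) ∨
  -- special composition
  (∃ f ∈ S, IsStrong o f ∧ (∃ m, IsLM o f m ∧ 1 < Multiset.card m.word) ∧
      (∃ u ∈ f.support, ∃ x : X, u = DiWord.mX x) ∧
      ∃ x : X, h = pR f (mono (DiWord.mX x)) - pL f (mono (DiWord.mX x))) ∨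
  -- equal composition
  (∃ f ∈ S, ∃ g ∈ S, f ≠ g ∧ (∃ m, IsLM o f m ∧ IsLM o g m) ∧ h = f - g) ∨
  -- short intersection composition
  (∃ f ∈ S, ∃ g ∈ S, (∃ mf, IsLM o f mf ∧ Multiset.card mf.word = 2) ∧
      (∃ mg, IsLM o g mg ∧ Multiset.card mg.word = 1) ∧
      ∃ x : X, ∃ gx : Di X k,
        (gx = pR g (mono (DiWord.mX x)) ∨ (IsStrong o g ∧ gx = pL g (mono (DiWord.mX x)))) ∧
        (∃ m, IsLM o f m ∧ IsLM o gx m) ∧ h = f - gx) ∨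
  -- equal multiplication composition
  (∃ f ∈ S, ∃ g ∈ S, IsStrong o f ∧ IsStrong o g ∧
      ∃ mf mg, IsLM o f mf ∧ IsLM o g mg ∧
        3 < Multiset.card mf.word + Multiset.card mg.word ∧
        mf ≠ mg ∧ mf.word = mg.word ∧
        ∃ x : X, h = pL f (mono (DiWord.mX x)) - pL g (mono (DiWord.mX x))) ∨
  -- long intersection composition
  (∃ f ∈ S, ∃ g ∈ S, IsStrong o f ∧ IsStrong o g ∧
      ∃ mf mg, IsLM o f mf ∧ IsLM o g mg ∧
        3 < Multiset.card mf.word + Multiset.card mg.word ∧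
        mf ≠ mg ∧ mf.word ≠ mg.word ∧
        ∃ w a b : Multiset X,
          mf.word ≤ w ∧ mg.word ≤ w ∧ (∀ w', mf.word ≤ w' → mg.word ≤ w' → w ≤ w') ∧
          mf.word + a = w ∧ mg.word + b = w ∧
          Multiset.card w < Multiset.card mf.word + Multiset.card mg.word ∧
          ∃ hb : b ≠ 0,
            ((a = 0 ∧ h = f - pL g (mono (DiWord.m1 b hb))) ∨
              (∃ ha : a ≠ 0,
                h = pL f (mono (DiWord.m1 a ha)) - pL g (mono (DiWord.m1 b hb)))))

/-- `S` is a Gröbner–Shirshov basis: `S` is monic and every composition is trivial mod `S`. -/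
def IsGSB (o : MonOrd X) (S : Set (Di X k)) : Prop :=
  MonicSet o S ∧ ∀ h, IsComp o S h → TrivialMod o S h

/-- Membership in the (two-sided) ideal `Id(S)` of `Di[X]` generated by `S`. -/
inductive InIdeal (S : Set (Di X k)) : Di X k → Prop
  | mem {f} : f ∈ S → InIdeal S f
  | zero : InIdeal S 0
  | add {f g} : InIdeal S f → InIdeal S g → InIdeal S (f + g)
  | smul (c : k) {f} : InIdeal S f → InIdeal S (c • f)
  | pL_left (f) {g} : InIdeal S g → InIdeal S (pL f g)
  | pL_right (f) {g} : InIdeal S g → InIdeal S (pL g f)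
  | pR_left (f) {g} : InIdeal S g → InIdeal S (pR f g)
  | pR_right (f) {g} : InIdeal S g → InIdeal S (pR g f)

/-- `I` is an ideal of `Di[X]`. -/
def IsIdeal (I : Set (Di X k)) : Prop :=
  (0 : Di X k) ∈ I ∧ (∀ f g, f ∈ I → g ∈ I → f + g ∈ I) ∧
    (∀ (c : k) f, f ∈ I → c • f ∈ I) ∧
    ∀ f g, g ∈ I → pL f g ∈ I ∧ pL g f ∈ I ∧ pR f g ∈ I ∧ pR g f ∈ I

/-- `Id(S)` as a `k`-submodule of `Di[X]`. -/
def idealSub (S : Set (Di X k)) : Submodule k (Di X k) where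
  carrier := {f | InIdeal S f}
  add_mem' := fun hf hg => InIdeal.add hf hg
  zero_mem' := InIdeal.zero
  smul_mem' := fun c _ hf => InIdeal.smul c hf



set_option linter.unusedSectionVars false

/-! ### Auxiliary development -/

section Aux

variable {Y : Type*} {K : Type*}

private lemma no_desc {α : Sort*} {r : α → α → Prop} (wf : WellFounded r)
    (f : ℕ → α) (h : ∀ n, r (f (n+1)) (f n)) : False := by
  have : ∀ a, ∀ n, f n = a → False := fun a =>
    wf.induction (C := fun a => ∀ n, f n = a → False) a
      (fun a ih n hn => ih (f (n+1)) (by rw [← hn]; exact h n) (n+1) rfl)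
  exact this (f 0) 0 rfl

lemma mul_add_ne {u : Multiset Y} (hu : u ≠ 0) (a : Multiset Y) : u + a ≠ 0 := by
  intro h
  have h1 := congrArg Multiset.card h
  have := hu
  rw [← Multiset.card_pos] at this
  simp only [Multiset.card_add, Multiset.card_zero] at h1
  omega

namespace MonOrd

variable (o : MonOrd Y)

lemma lt_irrefl' {u : Multiset Y} (hu : u ≠ 0) : ¬ o.lt u u := fun h =>
  o.wf.asymmetric (⟨u, hu⟩ : {v : Multiset Y // v ≠ 0}) ⟨u, hu⟩ h h

lemma lt_add {u a : Multiset Y} (hu : u ≠ 0) (ha : a ≠ 0) : o.lt u (u + a) := by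
  by_contra h
  have hne : u ≠ u + a := by
    intro he
    have h1 := congrArg Multiset.card he
    have := ha; rw [← Multiset.card_pos] at this
    simp only [Multiset.card_add] at h1
    omega
  have hlt : o.lt (u + a) u := (o.total u (u + a) hu (mul_add_ne hu _) hne).resolve_left h
  refine no_desc o.wf (fun n => (⟨u + n • a, mul_add_ne hu _⟩ : {v : Multiset Y // v ≠ 0})) ?_
  intro n
  show o.lt (u + (n+1) • a) (u + n • a)
  have : u + (n+1) • a = (u + a) + n • a := by rw [succ_nsmul]; abel
  rw [this]
  exact o.compat (u + a) u (n • a) (mul_add_ne hu _) hu hlt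

lemma dlt_trans {a b c : DiWord Y} (h1 : o.dlt a b) (h2 : o.dlt b c) : o.dlt a c := by
  rcases h1 with h1 | ⟨hw1, hl1⟩ <;> rcases h2 with h2 | ⟨hw2, hl2⟩
  · exact Or.inl (o.trans _ _ _ a.word_ne b.word_ne c.word_ne h1 h2)
  · exact Or.inl (hw2 ▸ h1)
  · exact Or.inl (hw1 ▸ h2)
  · exact Or.inr ⟨hw1.trans hw2, hl1.trans hl2⟩

lemma dlt_wf : WellFounded (o.dlt : DiWord Y → DiWord Y → Prop) := by
  have hwf : WellFounded (Prod.Lex (fun a b : {u : Multiset Y // u ≠ 0} => o.lt a.1 b.1)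
      ((· < ·) : ℕ → ℕ → Prop)) := WellFounded.prod_lex o.wf (Nat.lt_wfRel.wf)
  have hinv := InvImage.wf
    (fun a : DiWord Y => ((⟨a.word, a.word_ne⟩ : {u : Multiset Y // u ≠ 0}), a.lbl)) hwf
  refine Subrelation.wf (q := o.dlt) ?_ hinv
  intro a b hab
  show Prod.Lex _ _ ((⟨a.word, a.word_ne⟩ : {u : Multiset Y // u ≠ 0}), a.lbl)
    ((⟨b.word, b.word_ne⟩ : {u : Multiset Y // u ≠ 0}), b.lbl)
  rcases hab with h | ⟨hw, hl⟩
  · exact Prod.Lex.left _ _ h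
  · have hsub : (⟨a.word, a.word_ne⟩ : {u : Multiset Y // u ≠ 0}) = ⟨b.word, b.word_ne⟩ :=
      Subtype.ext hw
    rw [hsub]
    exact Prod.Lex.right _ hl

lemma dlt_irrefl (a : DiWord Y) : ¬ o.dlt a a := by
  rintro (h | ⟨_, hl⟩)
  · exact o.lt_irrefl' a.word_ne h
  · omega

lemma dlt_total {a b : DiWord Y} (hne : a ≠ b) : o.dlt a b ∨ o.dlt b a := by
  by_cases hw : a.word = b.word
  · have hl : a.lbl ≠ b.lbl := by
      intro hl
      exact hne (Subtype.ext (Prod.ext hw hl))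
    rcases Nat.lt_or_ge a.lbl b.lbl with h | h
    · exact Or.inl (Or.inr ⟨hw, h⟩)
    · exact Or.inr (Or.inr ⟨hw.symm, lt_of_le_of_ne h (Ne.symm hl)⟩)
  · rcases o.total a.word b.word a.word_ne b.word_ne hw with h | h
    · exact Or.inl (Or.inl h)
    · exact Or.inr (Or.inl h)

lemma dle_dlt_trans {a b c : DiWord Y} (h1 : o.dle a b) (h2 : o.dlt b c) : o.dlt a c := by
  rcases h1 with rfl | h1
  · exact h2
  · exact o.dlt_trans h1 h2

end MonOrd

end Aux
section LM

variable {Y K : Type*} [Field K] (o : MonOrd Y)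

lemma DiWord.lbl_cases (u : DiWord Y) : u.lbl = 1 ∨ u.lbl = 2 := by
  rcases u.2.2 with h | ⟨h, _⟩
  · exact Or.inl h
  · exact Or.inr h

lemma DiWord.extd {a b : DiWord Y} (hw : a.word = b.word) (hl : a.lbl = b.lbl) : a = b :=
  Subtype.ext (Prod.ext hw hl)

lemma exists_max (s : Finset (DiWord Y)) (hs : s.Nonempty) :
    ∃ m ∈ s, ∀ u ∈ s, u ≠ m → o.dlt u m := by
  classical
  induction s using Finset.induction_on with
  | empty => simp at hs
  | @insert a s ha ih =>
    rcases s.eq_empty_or_nonempty with rfl | hsne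
    · exact ⟨a, by simp, by simp⟩
    · obtain ⟨m, hm, hmax⟩ := ih hsne
      have ham : a ≠ m := fun h => ha (h ▸ hm)
      rcases o.dlt_total ham with h | h
      · refine ⟨m, Finset.mem_insert_of_mem hm, ?_⟩
        intro u hu hune
        rcases Finset.mem_insert.1 hu with rfl | hu
        · exact h
        · exact hmax u hu hune
      · refine ⟨a, Finset.mem_insert_self a s, ?_⟩
        intro u hu hune
        rcases Finset.mem_insert.1 hu with rfl | hu
        · exact absurd rfl hune
        · by_cases hum : u = m
          · exact hum ▸ h
          · exact o.dlt_trans (hmax u hu hum) h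

lemma exists_isLM {f : Di Y K} (hf : f ≠ 0) : ∃ m, IsLM o f m := by
  obtain ⟨m, hm, hmax⟩ := exists_max o f.support (Finsupp.support_nonempty_iff.2 hf)
  exact ⟨m, hm, hmax⟩

lemma isLM_unique {f : Di Y K} {m m' : DiWord Y} (h1 : IsLM o f m) (h2 : IsLM o f m') :
    m = m' := by
  by_contra hne
  exact o.dlt_irrefl m (o.dlt_trans (h2.2 m h1.1 hne) (h1.2 m' h2.1 (Ne.symm hne)))

lemma isLM_coeff_ne {f : Di Y K} {m : DiWord Y} (h : IsLM o f m) : f m ≠ 0 :=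
  Finsupp.mem_support_iff.1 h.1

lemma isLM_smul {f : Di Y K} {m : DiWord Y} {c : K} (hc : c ≠ 0) (h : IsLM o f m) :
    IsLM o (c • f) m := by
  have hsupp : ∀ u : DiWord Y, (c • f) u ≠ 0 ↔ f u ≠ 0 := by
    intro u
    rw [Finsupp.smul_apply, smul_eq_mul]
    constructor
    · intro h0 hf0; exact h0 (by rw [hf0, mul_zero])
    · exact fun h0 => mul_ne_zero hc h0
  constructor
  · exact Finsupp.mem_support_iff.2 ((hsupp m).2 (isLM_coeff_ne o h))
  · intro u hu hune
    exact h.2 u (Finsupp.mem_support_iff.2 ((hsupp u).1 (Finsupp.mem_support_iff.1 hu))) hune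

/-- A leading monomial with label `1` makes the polynomial strong. -/
lemma strong_words_of_lbl_one {f : Di Y K} {m : DiWord Y} (hm : IsLM o f m)
    (h1 : m.lbl = 1) : ∀ u ∈ f.support, u ≠ m → o.lt u.word m.word := by
  intro u hu hune
  rcases hm.2 u hu hune with h | ⟨_, hl⟩
  · exact h
  · rcases u.lbl_cases with h2 | h2 <;> omega

lemma isStrong_of_lbl_one {f : Di Y K} {m : DiWord Y} (hm : IsLM o f m)
    (h1 : m.lbl = 1) : IsStrong o f :=
  ⟨m, hm, strong_words_of_lbl_one o hm h1⟩

end LM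
section Mul

variable {Y K : Type*} [Field K] (o : MonOrd Y)

lemma pL_mono (f : Di Y K) (n : DiWord Y) :
    pL f (mono n) = f.sum fun u c => Finsupp.single (DiWord.pd u n) c := by
  unfold pL mono
  refine Finsupp.sum_congr fun u _ => ?_
  rw [Finsupp.sum_single_index (by rw [mul_zero, Finsupp.single_zero]), mul_one]

lemma pR_mono (f : Di Y K) (n : DiWord Y) :
    pR f (mono n) = f.sum fun u c => Finsupp.single (DiWord.pv u n) c := by
  unfold pR mono
  refine Finsupp.sum_congr fun u _ => ?_
  rw [Finsupp.sum_single_index (by rw [mul_zero, Finsupp.single_zero]), mul_one]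

/-- Leading monomial of a "multiply every monomial's word by `a`" map applied to a
strong polynomial. -/
lemma isLM_map {f : Di Y K} {m : DiWord Y} (hm : IsLM o f m)
    (hstrong : ∀ u ∈ f.support, u ≠ m → o.lt u.word m.word)
    (T : DiWord Y → DiWord Y) (a : Multiset Y)
    (hT : ∀ u, (T u).word = u.word + a) :
    IsLM o (f.sum fun u c => Finsupp.single (T u) c) (T m) ∧
      (f.sum fun u c => Finsupp.single (T u) c) (T m) = f m := by
  classical
  set g : Di Y K := f.sum fun u c => Finsupp.single (T u) c with hg
  have happ : ∀ b, g b = ∑ u ∈ f.support, if T u = b then f u else 0 := by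
    intro b
    rw [hg, Finsupp.sum_apply]
    refine Finset.sum_congr rfl fun u _ => ?_
    show (Finsupp.single (T u) (f u)) b = _
    rw [Finsupp.single_apply]
  have hwordinj : ∀ u ∈ f.support, u ≠ m → T u ≠ T m := by
    intro u hu hune hTe
    have hwe : u.word + a = m.word + a := by rw [← hT u, ← hT m, hTe]
    have : u.word = m.word := by
      have := Multiset.ext.1 hwe
      ext x
      have h2 := this x
      simp only [Multiset.count_add] at h2
      omega
    exact o.lt_irrefl' m.word_ne (this ▸ hstrong u hu hune)
  have hval : g (T m) = f m := by
    rw [happ]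
    rw [Finset.sum_eq_single_of_mem m hm.1]
    · simp
    · intro u hu hune
      rw [if_neg (hwordinj u hu hune)]
  refine ⟨⟨Finsupp.mem_support_iff.2 (by rw [hval]; exact isLM_coeff_ne o hm), ?_⟩, hval⟩
  intro b hb hbne
  have hgb : g b ≠ 0 := Finsupp.mem_support_iff.1 hb
  rw [happ] at hgb
  obtain ⟨u, hu, hterm⟩ := Finset.exists_ne_zero_of_sum_ne_zero hgb
  have hTu : T u = b := by
    by_contra h; rw [if_neg h] at hterm; exact hterm rfl
  have hune : u ≠ m := fun h => hbne (by rw [← hTu, h])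
  have hlt : o.lt u.word m.word := hstrong u hu hune
  left
  rw [← hTu, hT u, hT m]
  exact o.compat u.word m.word a u.word_ne m.word_ne hlt

lemma isLM_pL {f : Di Y K} {m : DiWord Y} (hm : IsLM o f m)
    (hstrong : ∀ u ∈ f.support, u ≠ m → o.lt u.word m.word)
    (a : Multiset Y) (ha : a ≠ 0) :
    IsLM o (pL f (mono (DiWord.m1 a ha))) (DiWord.pd m (DiWord.m1 a ha)) ∧
      (pL f (mono (DiWord.m1 a ha))) (DiWord.pd m (DiWord.m1 a ha)) = f m := by
  rw [pL_mono]
  exact isLM_map o hm hstrong (fun u => DiWord.pd u (DiWord.m1 a ha)) a (fun u => rfl)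

end Mul
section Dickson

variable {Y : Type*} [Fintype Y]

lemma multiset_lt_wf : WellFounded ((· < ·) : Multiset Y → Multiset Y → Prop) := by
  refine Subrelation.wf (q := (· < ·)) ?_ (InvImage.wf Multiset.card Nat.lt_wfRel.wf)
  intro a b hab
  exact Multiset.card_lt_card hab

lemma multiset_pwo (W : Set (Multiset Y)) :
    ∀ f : ℕ → Multiset Y, (∀ n, f n ∈ W) → ∃ i j, i < j ∧ f i ≤ f j := by
  classical
  intro f _
  obtain ⟨i, j, hij, hle⟩ := (Set.isPWO_of_wellQuasiOrderedLE (Set.univ : Set (Y →₀ ℕ))).exists_lt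
    (f := fun n => Multiset.toFinsupp (f n)) (fun _ => Set.mem_univ _)
  refine ⟨i, j, hij, ?_⟩
  rw [Multiset.le_iff_count]
  intro y
  have := Finsupp.le_def.1 hle y
  simpa [Multiset.toFinsupp_apply] using this

/-- The set of minimal elements of a set of multisets over a finite type is finite. -/
lemma minimals_finite (W : Set (Multiset Y)) :
    Set.Finite {w ∈ W | ∀ v ∈ W, ¬ v < w} := by
  classical
  set B := {w ∈ W | ∀ v ∈ W, ¬ v < w} with hB
  by_contra hinf
  have hinf' : B.Infinite := hinf
  set e := hinf'.natEmbedding with he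
  obtain ⟨i, j, hij, hle⟩ := multiset_pwo W (fun n => (e n : Multiset Y))
    (fun n => (e n).2.1)
  have hne : (e i : Multiset Y) ≠ (e j : Multiset Y) := by
    intro h
    exact (Nat.ne_of_lt hij) (e.injective (Subtype.ext h))
  exact (e j).2.2 (e i) (e i).2.1 (lt_of_le_of_ne hle hne)

/-- Every element of `W` dominates a minimal element of `W`. -/
lemma exists_minimal_le (W : Set (Multiset Y)) :
    ∀ w ∈ W, ∃ b ∈ {w ∈ W | ∀ v ∈ W, ¬ v < w}, b ≤ w := by
  intro w hw
  induction w using (multiset_lt_wf (Y := Y)).induction with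
  | _ w ih =>
    by_cases hmin : ∀ v ∈ W, ¬ v < w
    · exact ⟨w, ⟨hw, hmin⟩, le_rfl⟩
    · push_neg at hmin
      obtain ⟨v, hv, hvw⟩ := hmin
      obtain ⟨b, hb, hbv⟩ := ih v hvw hv
      exact ⟨b, hb, hbv.trans hvw.le⟩

end Dickson
section Build

variable {Y K : Type*} [Fintype Y] [Field K]

lemma inIdeal_subset {S I : Set (Di Y K)} (hI : IsIdeal I) (hS : S ⊆ I) :
    ∀ {f}, InIdeal S f → f ∈ I := by
  intro f hf
  induction hf with
  | mem h => exact hS h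
  | zero => exact hI.1
  | add _ _ ih1 ih2 => exact hI.2.1 _ _ ih1 ih2
  | smul c _ ih => exact hI.2.2.1 c _ ih
  | pL_left f _ ih => exact (hI.2.2.2 f _ ih).1
  | pL_right f _ ih => exact (hI.2.2.2 f _ ih).2.1
  | pR_left f _ ih => exact (hI.2.2.2 f _ ih).2.2.1
  | pR_right f _ ih => exact (hI.2.2.2 f _ ih).2.2.2

lemma ideal_sub_mem {I : Set (Di Y K)} (hI : IsIdeal I) {a b : Di Y K}
    (ha : a ∈ I) (hb : b ∈ I) : a - b ∈ I := by
  have := hI.2.1 a ((-1 : K) • b) ha (hI.2.2.1 (-1) b hb)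
  rwa [neg_one_smul, ← sub_eq_add_neg] at this

/-- Leading monomials of elements of `I`. -/
def LMset (o : MonOrd Y) (I : Set (Di Y K)) : Set (DiWord Y) := {m | ∃ h ∈ I, IsLM o h m}

/-- Words of label-1 leading monomials. -/
def W1set (o : MonOrd Y) (I : Set (Di Y K)) : Set (Multiset Y) :=
  {w | ∃ hw : w ≠ 0, DiWord.m1 w hw ∈ LMset o I}

/-- Minimal elements of `W1set`. -/
def Bset (o : MonOrd Y) (I : Set (Di Y K)) : Set (Multiset Y) :=
  {w ∈ W1set o I | ∀ v ∈ W1set o I, ¬ v < w}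

/-- The finitely many leading monomials we pick generators at. -/
def Nset (o : MonOrd Y) (I : Set (Di Y K)) : Set (DiWord Y) :=
  {m ∈ LMset o I | m.lbl = 2} ∪ {m | m.lbl = 1 ∧ m.word ∈ Bset o I}

lemma Nset_subset (o : MonOrd Y) (I : Set (Di Y K)) : Nset o I ⊆ LMset o I := by
  rintro m (⟨hm, _⟩ | ⟨hl, hw⟩)
  · exact hm
  · obtain ⟨hne, hmem⟩ := hw.1
    have hm : m = DiWord.m1 m.word hne := DiWord.extd rfl hl
    rw [hm]
    exact hmem

lemma Nset_finite (o : MonOrd Y) (I : Set (Di Y K)) : (Nset o I).Finite := by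
  classical
  refine Set.Finite.union ?_ ?_
  · refine Set.Finite.subset (Set.finite_range (fun p : Y × Y => DiWord.m2 p.1 p.2)) ?_
    rintro m ⟨_, hl⟩
    have hcard : Multiset.card m.word = 2 := by
      rcases m.2.2 with h | ⟨_, h⟩
      · have h' : m.lbl = 1 := h
        omega
      · exact h
    obtain ⟨x, y, hxy⟩ := Multiset.card_eq_two.1 hcard
    exact ⟨(x, y), DiWord.extd (hxy.symm) (hl.symm)⟩
  · refine Set.Finite.of_finite_image (f := DiWord.word) ?_ ?_
    · refine Set.Finite.subset (minimals_finite (W1set o I)) ?_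
      rintro w ⟨m, ⟨_, hw⟩, rfl⟩
      exact hw
    · rintro m ⟨hl, _⟩ m' ⟨hl', _⟩ he
      exact DiWord.extd he (hl.trans hl'.symm)

end Build
/-- If `X` is finite, then every ideal of the free commutative dialgebra `Di[X]` over a
field `k` has a finite Gröbner–Shirshov basis with respect to any monomial-center
ordering. -/
theorem finite_gsb_exists {Y K : Type*} [Fintype Y] [Field K] (o : MonOrd Y)
    (I : Set (Di Y K)) (hI : IsIdeal I) :
    ∃ S : Set (Di Y K), S.Finite ∧ S ⊆ I ∧ MonicSet o S ∧
      {f | InIdeal S f} = I ∧ ∀ h, IsComp o S h → TrivialMod o S h := by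
  classical
  -- pick monic representatives of all leading monomials of `I`
  have hpick : ∀ m : DiWord Y, ∃ h, h ∈ I ∧ (m ∈ LMset o I → IsLM o h m ∧ h m = 1) := by
    intro m
    by_cases hm : m ∈ LMset o I
    · obtain ⟨h, hhI, hlm⟩ := hm
      have hc : h m ≠ 0 := isLM_coeff_ne o hlm
      refine ⟨(h m)⁻¹ • h, hI.2.2.1 _ _ hhI, fun _ =>
        ⟨isLM_smul o (inv_ne_zero hc) hlm, ?_⟩⟩
      rw [Finsupp.smul_apply, smul_eq_mul, inv_mul_cancel₀ hc]
    · exact ⟨0, hI.1, fun h => absurd h hm⟩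
  choose pick hpI hpLM using hpick
  set S : Set (Di Y K) := pick '' Nset o I with hSdef
  have hSfin : S.Finite := (Nset_finite o I).image _
  have hSI : S ⊆ I := by rintro s ⟨m, hm, rfl⟩; exact hpI m
  have hSmonic : MonicSet o S := by
    rintro s ⟨m, hm, rfl⟩
    obtain ⟨h1, h2⟩ := hpLM m (Nset_subset o I hm)
    exact ⟨m, h1, h2⟩
  -- coverage: every leading monomial of `I` is the LM of a monic normal `S`-polynomial
  have hcover : ∀ m ∈ LMset o I, ∃ g, IsNormal o S g ∧ IsLM o g m ∧ g m = 1 ∧ InIdeal S g := by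
    intro m hm
    rcases m.lbl_cases with hl | hl
    · -- label 1
      have hwW1 : m.word ∈ W1set o I := by
        refine ⟨m.word_ne, ?_⟩
        have he : m = DiWord.m1 m.word m.word_ne := DiWord.extd rfl hl
        rw [← he]
        exact hm
      obtain ⟨b, hbB, hble⟩ := exists_minimal_le (W1set o I) m.word hwW1
      obtain ⟨hbne, hbM⟩ := hbB.1
      have hnN : DiWord.m1 b hbne ∈ Nset o I := Or.inr ⟨rfl, hbB⟩
      have hsS : pick (DiWord.m1 b hbne) ∈ S := ⟨_, hnN, rfl⟩
      obtain ⟨hslm, hsc⟩ := hpLM (DiWord.m1 b hbne) hbM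
      have hstrong := strong_words_of_lbl_one o hslm rfl
      by_cases hbw : b = m.word
      · have hmn : m = DiWord.m1 b hbne := DiWord.extd hbw.symm hl
        refine ⟨pick (DiWord.m1 b hbne), Or.inl hsS, ?_, ?_, InIdeal.mem hsS⟩
        · rw [hmn]; exact hslm
        · rw [hmn]; exact hsc
      · have hane : m.word - b ≠ 0 := by
          intro h0
          exact hbw (le_antisymm hble (tsub_eq_zero_iff_le.1 h0))
        have hba : b + (m.word - b) = m.word := by
          rw [add_comm]; exact tsub_add_cancel_of_le hble
        obtain ⟨hlm', hval⟩ := isLM_pL o hslm hstrong (m.word - b) hane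
        have hpdm : DiWord.pd (DiWord.m1 b hbne) (DiWord.m1 (m.word - b) hane) = m :=
          DiWord.extd (show b + (m.word - b) = m.word from hba)
            (show (1 : ℕ) = m.lbl from hl.symm)
        rw [hpdm] at hlm' hval
        refine ⟨pL (pick (DiWord.m1 b hbne)) (mono (DiWord.m1 (m.word - b) hane)),
          Or.inr (Or.inr ⟨_, hsS, m.word - b, hane, ⟨_, hslm, hstrong⟩, rfl⟩),
          hlm', by rw [hval]; exact hsc,
          InIdeal.pL_right _ (InIdeal.mem hsS)⟩
    · -- label 2
      have hmN : m ∈ Nset o I := Or.inl ⟨hm, hl⟩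
      obtain ⟨h1, h2⟩ := hpLM m hm
      exact ⟨pick m, Or.inl ⟨m, hmN, rfl⟩, h1, h2, InIdeal.mem ⟨m, hmN, rfl⟩⟩
  -- main induction: every element of `I` is trivial mod `S` and lies in `Id(S)`
  have hmain : ∀ m : DiWord Y, ∀ h, h ∈ I → IsLM o h m → TrivialMod o S h ∧ InIdeal S h := by
    intro m
    induction m using o.dlt_wf.induction with
    | _ m ih =>
      intro h hhI hlm
      obtain ⟨g, hgnorm, hglm, hgc, hgid⟩ := hcover m ⟨h, hhI, hlm⟩
      have hgI : g ∈ I := inIdeal_subset hI hSI hgid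
      have hh'I : h - h m • g ∈ I := ideal_sub_mem hI hhI (hI.2.2.1 (h m) g hgI)
      have hh'm : (h - h m • g) m = 0 := by
        rw [Finsupp.sub_apply, Finsupp.smul_apply, smul_eq_mul, hgc, mul_one, sub_self]
      have hh'supp : ∀ u, (h - h m • g) u ≠ 0 → o.dlt u m := by
        intro u hu
        have hune : u ≠ m := fun he => hu (he ▸ hh'm)
        have : h u ≠ 0 ∨ g u ≠ 0 := by
          by_contra hcon
          push_neg at hcon
          apply hu
          rw [Finsupp.sub_apply, Finsupp.smul_apply, smul_eq_mul, hcon.1, hcon.2,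
            mul_zero, sub_zero]
        rcases this with h0 | h0
        · exact hlm.2 u (Finsupp.mem_support_iff.2 h0) hune
        · exact hglm.2 u (Finsupp.mem_support_iff.2 h0) hune
      by_cases hh'0 : h - h m • g = 0
      · have hhg : h = h m • g := by rwa [sub_eq_zero] at hh'0
        constructor
        · refine ⟨1, fun _ => h m, fun _ => g, fun _ => hgnorm, ?_, ?_⟩
          · rw [Fin.sum_univ_one]; exact hhg
          · intro i _ mi mh hmi hmh
            rw [isLM_unique o hmi hglm, isLM_unique o hmh hlm]
            exact Or.inl rfl
        · rw [hhg]; exact InIdeal.smul _ hgid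
      · obtain ⟨m', hm'⟩ := exists_isLM o hh'0
        have hm'lt : o.dlt m' m := hh'supp m' (Finsupp.mem_support_iff.1 hm'.1)
        obtain ⟨⟨n, α, gs, hnorm, hsum, hbound⟩, hid'⟩ := ih m' hm'lt _ hh'I hm'
        constructor
        · refine ⟨n + 1, Fin.cons (h m) α, Fin.cons g gs, ?_, ?_, ?_⟩
          · intro i
            rcases Fin.eq_zero_or_eq_succ i with rfl | ⟨j, rfl⟩
            · simpa using hgnorm
            · simpa using hnorm j
          · rw [Fin.sum_univ_succ]
            simp only [Fin.cons_zero, Fin.cons_succ]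
            rw [← hsum]
            abel
          · intro i hi mi mh hmi hmh
            have hmh' : mh = m := isLM_unique o hmh hlm
            rcases Fin.eq_zero_or_eq_succ i with rfl | ⟨j, rfl⟩
            · simp only [Fin.cons_zero] at hmi
              rw [isLM_unique o hmi hglm, hmh']
              exact Or.inl rfl
            · simp only [Fin.cons_succ] at hmi hi
              have := hbound j hi mi m' hmi hm'
              rw [hmh']
              exact Or.inr (o.dle_dlt_trans this hm'lt)
        · have : h = (h - h m • g) + h m • g := by abel
          rw [this]
          exact InIdeal.add hid' (InIdeal.smul _ hgid)
  have hall : ∀ h ∈ I, TrivialMod o S h ∧ InIdeal S h := by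
    intro h hh
    by_cases h0 : h = 0
    · subst h0
      exact ⟨⟨0, Fin.elim0, Fin.elim0, fun i => i.elim0, by simp, fun i => i.elim0⟩,
        InIdeal.zero⟩
    · obtain ⟨m, hm⟩ := exists_isLM o h0
      exact hmain m h hh hm
  -- compositions lie in `I`
  have hpmem : ∀ f ∈ I, ∀ q : Di Y K, pL f q ∈ I ∧ pR f q ∈ I := by
    intro f hf q
    exact ⟨(hI.2.2.2 q f hf).2.1, (hI.2.2.2 q f hf).2.2.2⟩
  have hcompI : ∀ h, IsComp o S h → h ∈ I := by
    intro h hcomp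
    rcases hcomp with ⟨f, hf, _, x, hx | hx⟩ | ⟨f, hf, _, _, _, x, hx⟩ |
      ⟨f, hf, g, hg, _, _, hx⟩ | ⟨f, hf, g, hg, _, _, x, gx, hgx, _, hx⟩ |
      ⟨f, hf, g, hg, _, _, mf, mg, _, _, _, _, _, x, hx⟩ |
      ⟨f, hf, g, hg, _, _, mf, mg, _, _, _, _, _, w, a, b, _, _, _, _, _, _, hb, hcase⟩
    · rw [hx]; exact (hpmem f (hSI hf) _).2
    · rw [hx]; exact (hpmem f (hSI hf) _).1
    · rw [hx]
      exact ideal_sub_mem hI (hpmem f (hSI hf) _).2 (hpmem f (hSI hf) _).1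
    · rw [hx]; exact ideal_sub_mem hI (hSI hf) (hSI hg)
    · rw [hx]
      have hgxI : gx ∈ I := by
        rcases hgx with h1 | ⟨_, h1⟩
        · rw [h1]; exact (hpmem g (hSI hg) _).2
        · rw [h1]; exact (hpmem g (hSI hg) _).1
      exact ideal_sub_mem hI (hSI hf) hgxI
    · rw [hx]
      exact ideal_sub_mem hI (hpmem f (hSI hf) _).1 (hpmem g (hSI hg) _).1
    · rcases hcase with ⟨_, hx⟩ | ⟨ha, hx⟩
      · rw [hx]; exact ideal_sub_mem hI (hSI hf) (hpmem g (hSI hg) _).1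
      · rw [hx]
        exact ideal_sub_mem hI (hpmem f (hSI hf) _).1 (hpmem g (hSI hg) _).1
  refine ⟨S, hSfin, hSI, hSmonic, ?_, ?_⟩
  · ext f
    simp only [Set.mem_setOf_eq]
    exact ⟨fun hf => inIdeal_subset hI hSI hf, fun hf => (hall f hf).2⟩
  · intro h hcomp
    exact (hall h (hcompI h hcomp)).1

end CDi
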